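/- Let μ be a probability measure on ℝ^d that is absolutely continuous with respect to Lebesgue measure and has bounded support, let r > 0 and s > 0, and let X_1, X_2, … be i.i.d. with law μ. Then for every ε > 0, P( sup_{z ∈ supp(μ)} |SD^r_s(z | X_{1:n}) − SD^r_s(z | μ)| > ε ) → 0 as n → ∞. -/

import Mathlib

open MeasureTheory

/-- The sigmoid function with scale `s`. -/
noncomputable def sig (s t : ℝ) : ℝ := 1 / (1 + Real.exp (-t / s))

/-- The (smoothed, `s > 0`) sphere depth
`SD^r_s(z|μ) = inf_{‖c−z‖=r} ∫ sig_s(r² − ‖x − c‖²) dμ(x)`. -/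
noncomputable def SDs (d : ℕ) (r s : ℝ) (z : EuclideanSpace ℝ (Fin d))
    (μ : Measure (EuclideanSpace ℝ (Fin d))) : ℝ :=
  ⨅ c : Metric.sphere z r, ∫ x, sig s (r ^ 2 - ‖x - (c : EuclideanSpace ℝ (Fin d))‖ ^ 2) ∂μ

/-- The sphere depth of the empirical measure of the samples `x₁,…,xₙ`:
`SD^r_s(z|x_{1:n}) = inf_{‖c−z‖=r} (1/n) Σᵢ sig_s(r² − ‖xᵢ − c‖²)`. -/
noncomputable def SDemp (d : ℕ) (r s : ℝ) (z : EuclideanSpace ℝ (Fin d)) (n : ℕ)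
    (x : Fin n → EuclideanSpace ℝ (Fin d)) : ℝ :=
  ⨅ c : Metric.sphere z r,
    (n : ℝ)⁻¹ * ∑ i, sig s (r ^ 2 - ‖x i - (c : EuclideanSpace ℝ (Fin d))‖ ^ 2)

/-- The (topological) support of a measure: points all of whose neighborhoods have
positive measure. -/
def msupport {E : Type*} [TopologicalSpace E] [MeasurableSpace E] (μ : Measure E) : Set E :=
  {x | ∀ U ∈ nhds x, μ U ≠ 0}


section Aux

open MeasureTheory

lemma sig_denom_pos (s t : ℝ) : 0 < 1 + Real.exp (-t / s) := by positivity

lemma sig_nonneg (s t : ℝ) : 0 ≤ sig s t := by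
  unfold sig; positivity

lemma sig_le_one (s t : ℝ) : sig s t ≤ 1 := by
  unfold sig
  rw [div_le_one (sig_denom_pos s t)]
  nlinarith [Real.exp_pos (-t / s)]

lemma sig_continuous (s : ℝ) : Continuous (sig s) := by
  unfold sig
  exact continuous_const.div
    (continuous_const.add (Real.continuous_exp.comp (continuous_id.neg.div_const s)))
    (fun t => ne_of_gt (sig_denom_pos s t))

lemma sig_lipschitz {s : ℝ} (hs : 0 < s) (a b : ℝ) :
    |sig s a - sig s b| ≤ (4 * s)⁻¹ * |a - b| := by
  have key : ∀ t : ℝ, HasDerivAt (sig s)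
      (-(Real.exp (-t / s) * (-1 / s)) / (1 + Real.exp (-t / s)) ^ 2) t := by
    intro t
    have h1 : HasDerivAt (fun t : ℝ => -t / s) (-1 / s) t :=
      (hasDerivAt_id t).neg.div_const s
    have h2 : HasDerivAt (fun t : ℝ => Real.exp (-t / s)) (Real.exp (-t / s) * (-1 / s)) t :=
      h1.exp
    have h3 : HasDerivAt (fun t : ℝ => 1 + Real.exp (-t / s))
        (Real.exp (-t / s) * (-1 / s)) t := h2.const_add 1
    have h4 := h3.inv (ne_of_gt (sig_denom_pos s t))
    have h5 : sig s = fun t : ℝ => (1 + Real.exp (-t / s))⁻¹ := by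
      funext u; unfold sig; rw [one_div]
    rw [h5]
    exact h4
  have bound : ∀ t : ℝ, ‖-(Real.exp (-t / s) * (-1 / s)) / (1 + Real.exp (-t / s)) ^ 2‖
      ≤ (4 * s)⁻¹ := by
    intro t
    have he := Real.exp_pos (-t / s)
    set e := Real.exp (-t / s)
    have h1 : -(e * (-1 / s)) / (1 + e) ^ 2 = e / (s * (1 + e) ^ 2) := by
      field_simp
    rw [Real.norm_eq_abs, h1, abs_of_nonneg (by positivity)]
    rw [div_le_iff₀ (by positivity)]
    rw [inv_mul_eq_div, le_div_iff₀ (by positivity)]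
    nlinarith [sq_nonneg (1 - e)]
  have := convex_univ.norm_image_sub_le_of_norm_hasDerivWithin_le
    (f := sig s) (fun x _ => (key x).hasDerivWithinAt) (fun x _ => bound x)
    (Set.mem_univ b) (Set.mem_univ a)
  simpa [Real.norm_eq_abs] using this

lemma g_lip {E : Type*} [NormedAddCommGroup E] {s r R : ℝ} (hs : 0 < s) (hr : 0 ≤ r)
    (hR : 0 ≤ R) {x c c' : E} (hx : ‖x‖ ≤ R) (hc : ‖c‖ ≤ R + r) (hc' : ‖c'‖ ≤ R + r) :
    |sig s (r ^ 2 - ‖x - c‖ ^ 2) - sig s (r ^ 2 - ‖x - c'‖ ^ 2)|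
      ≤ ((2 * R + r) / s) * ‖c - c'‖ := by
  set a := ‖x - c‖ with ha
  set b := ‖x - c'‖ with hb
  have ha0 : 0 ≤ a := norm_nonneg _
  have hb0 : 0 ≤ b := norm_nonneg _
  have haR : a ≤ 2 * R + r := by
    calc a ≤ ‖x‖ + ‖c‖ := norm_sub_le _ _
    _ ≤ R + (R + r) := add_le_add hx hc
    _ = 2 * R + r := by ring
  have hbR : b ≤ 2 * R + r := by
    calc b ≤ ‖x‖ + ‖c'‖ := norm_sub_le _ _
    _ ≤ R + (R + r) := add_le_add hx hc'
    _ = 2 * R + r := by ring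
  have hab : |b - a| ≤ ‖c - c'‖ := by
    have h1 := abs_norm_sub_norm_le (x - c') (x - c)
    have h2 : (x - c') - (x - c) = c - c' := by abel
    rw [h2] at h1
    exact h1
  have h1 := sig_lipschitz hs (r ^ 2 - a ^ 2) (r ^ 2 - b ^ 2)
  have h2 : |(r ^ 2 - a ^ 2) - (r ^ 2 - b ^ 2)| = (b + a) * |b - a| := by
    have h4 : (r ^ 2 - a ^ 2) - (r ^ 2 - b ^ 2) = (b + a) * (b - a) := by ring
    rw [h4, abs_mul, abs_of_nonneg (by linarith)]
  have h3 : (b + a) * |b - a| ≤ (2 * (2 * R + r)) * ‖c - c'‖ := by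
    apply mul_le_mul (by linarith) hab (abs_nonneg _) (by linarith)
  calc |sig s (r ^ 2 - a ^ 2) - sig s (r ^ 2 - b ^ 2)|
      ≤ (4 * s)⁻¹ * |(r ^ 2 - a ^ 2) - (r ^ 2 - b ^ 2)| := h1
    _ ≤ (4 * s)⁻¹ * ((2 * (2 * R + r)) * ‖c - c'‖) := by
        rw [h2]; exact mul_le_mul_of_nonneg_left h3 (by positivity)
    _ ≤ ((2 * R + r) / s) * ‖c - c'‖ := by
        rw [div_mul_eq_mul_div, inv_mul_eq_div, div_le_div_iff₀ (by positivity) hs]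
        nlinarith [mul_nonneg (mul_nonneg (by linarith : (0:ℝ) ≤ 2*R+r) (norm_nonneg (c - c'))) hs.le]

lemma msupport_compl_null {E : Type*} [TopologicalSpace E] [MeasurableSpace E]
    [SecondCountableTopology E] (μ : Measure E) :
    μ (msupport μ)ᶜ = 0 := by
  have hsub : (msupport μ)ᶜ ⊆ ⋃ x : ↥(msupport μ)ᶜ,
      interior (Classical.choose (not_forall.1 x.2)) := by
    intro x hx
    refine Set.mem_iUnion.2 ⟨⟨x, hx⟩, ?_⟩
    have h := Classical.choose_spec (not_forall.1 (⟨x, hx⟩ : ↥(msupport μ)ᶜ).2)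
    rcases _root_.not_imp.1 h with ⟨hU, _⟩
    exact mem_interior_iff_mem_nhds.2 hU
  set V : ↥(msupport μ)ᶜ → Set E := fun x => interior (Classical.choose (not_forall.1 x.2))
  have hVopen : ∀ x, IsOpen (V x) := fun x => isOpen_interior
  have hVnull : ∀ x, μ (V x) = 0 := by
    intro x
    have h := Classical.choose_spec (not_forall.1 x.2)
    rcases _root_.not_imp.1 h with ⟨_, hμ⟩
    exact measure_mono_null interior_subset (not_not.1 hμ)
  obtain ⟨T, hTc, hTU⟩ := TopologicalSpace.isOpen_iUnion_countable V hVopen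
  have h1 : (msupport μ)ᶜ ⊆ ⋃ i ∈ T, V i := by rw [hTU]; exact hsub
  exact measure_mono_null h1 ((measure_biUnion_null_iff hTc).2 fun x _ => hVnull x)

lemma isClosed_msupport {E : Type*} [TopologicalSpace E] [MeasurableSpace E]
    (μ : Measure E) : IsClosed (msupport μ) := by
  rw [← isOpen_compl_iff, isOpen_iff_mem_nhds]
  intro x hx
  rcases not_forall.1 hx with ⟨U, hU⟩
  rcases _root_.not_imp.1 hU with ⟨hUx, hUμ⟩
  have hnull : μ U = 0 := not_not.1 hUμ
  refine Filter.mem_of_superset (interior_mem_nhds.2 hUx) ?_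
  intro y hy hyms
  exact hyms U (mem_interior_iff_mem_nhds.1 hy) hnull

lemma abs_iInf_sub_iInf {ι : Sort*} {f g : ι → ℝ} (hf0 : ∀ i, 0 ≤ f i) (hg0 : ∀ i, 0 ≤ g i)
    {B : ℝ} (hB : 0 ≤ B) (h : ∀ i, |f i - g i| ≤ B) : |(⨅ i, f i) - ⨅ i, g i| ≤ B := by
  rcases isEmpty_or_nonempty ι with hι | hι
  · simp [Real.iInf_of_isEmpty, hB]
  · have bf : BddBelow (Set.range f) := ⟨0, by rintro _ ⟨i, rfl⟩; exact hf0 i⟩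
    have bg : BddBelow (Set.range g) := ⟨0, by rintro _ ⟨i, rfl⟩; exact hg0 i⟩
    rw [abs_sub_le_iff]
    constructor
    · have h1 : ∀ i, (⨅ j, f j) - B ≤ g i := fun i => by
        have h2 := ciInf_le bf i
        have h3 := (abs_le.1 (h i)).2
        linarith
      have := le_ciInf h1
      linarith
    · have h1 : ∀ i, (⨅ j, g j) - B ≤ f i := fun i => by
        have h2 := ciInf_le bg i
        have h3 := (abs_le.1 (h i)).1
        linarith
      have := le_ciInf h1
      linarith

lemma inv_mul_nat_le {a : ℝ} (n : ℕ) (ha : 0 ≤ a) : (n : ℝ)⁻¹ * ((n : ℝ) * a) ≤ a := by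
  rcases Nat.eq_zero_or_pos n with h | h
  · simp [h, ha]
  · have : (0:ℝ) < n := by exact_mod_cast h
    rw [← mul_assoc, inv_mul_cancel₀ (ne_of_gt this), one_mul]

end Aux

open ProbabilityTheory in
/-- Uniform consistency on the support: if `μ` is absolutely continuous with bounded
support, the supremum over the support of the deviation of the empirical sphere depth
tends to zero in probability. -/
theorem stmt_16 (d : ℕ) (μ : Measure (EuclideanSpace ℝ (Fin d))) [IsProbabilityMeasure μ]
    (habs : μ ≪ volume) (hbdd : Bornology.IsBounded (msupport μ))
    (r s : ℝ) (hr : 0 < r) (hs : 0 < s)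
    {Ω : Type*} [MeasurableSpace Ω] (P : Measure Ω) [IsProbabilityMeasure P]
    (X : ℕ → Ω → EuclideanSpace ℝ (Fin d))
    (hXmeas : ∀ i, Measurable (X i)) (hXlaw : ∀ i, P.map (X i) = μ)
    (hXindep : iIndepFun X P) :
    ∀ ε > (0 : ℝ),
      Filter.Tendsto (fun n : ℕ =>
          P {ω | ε < ⨆ z : msupport μ,
            |SDemp d r s (z : EuclideanSpace ℝ (Fin d)) n (fun i : Fin n => X i ω) -
              SDs d r s (z : EuclideanSpace ℝ (Fin d)) μ|})
        Filter.atTop (nhds 0) := by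
  classical
  intro ε hε
  -- bounded support
  obtain ⟨R₀, hR₀⟩ := hbdd.subset_closedBall 0
  set R : ℝ := max R₀ 0 with hRdef
  have hR : 0 ≤ R := le_max_right _ _
  have hsupp : msupport μ ⊆ Metric.closedBall 0 R :=
    hR₀.trans (Metric.closedBall_subset_closedBall (le_max_left _ _))
  have haeR : ∀ᵐ x ∂μ, ‖x‖ ≤ R := by
    have h0 : μ {x | ¬ x ∈ msupport μ} = 0 := msupport_compl_null μ
    refine (ae_iff.2 h0).mono ?_
    intro x hx
    exact mem_closedBall_zero_iff.1 (hsupp hx)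
  -- constants
  set L : ℝ := (2 * R + r) / s with hLdef
  have hL0 : 0 ≤ L := by positivity
  set δ : ℝ := ε / (4 * (L + 1)) with hδdef
  have hδ0 : 0 < δ := by positivity
  have hLδ : 2 * (L * δ) ≤ ε / 2 := by
    have h1 : (0:ℝ) < L + 1 := by linarith
    rw [hδdef]
    have h2 : 2 * (L * (ε / (4 * (L + 1)))) = (L * ε) / (2 * (L + 1)) := by
      field_simp; ring
    rw [h2, div_le_div_iff₀ (by positivity) (by norm_num : (0:ℝ) < 2)]
    nlinarith [mul_nonneg hL0 hε.le]
  -- the functions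
  set g : EuclideanSpace ℝ (Fin d) → EuclideanSpace ℝ (Fin d) → ℝ := fun c x => sig s (r ^ 2 - ‖x - c‖ ^ 2) with hgdef
  have hgcont : ∀ c, Continuous (g c) := by
    intro c
    exact (sig_continuous s).comp
      (continuous_const.sub ((continuous_id.sub continuous_const).norm.pow 2))
  have hg0 : ∀ c x, 0 ≤ g c x := fun c x => sig_nonneg _ _
  have hg1 : ∀ c x, g c x ≤ 1 := fun c x => sig_le_one _ _
  have hgint : ∀ c, Integrable (g c) μ := by
    intro c
    refine Integrable.mono' (integrable_const 1) (hgcont c).aestronglyMeasurable ?_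
    exact Filter.Eventually.of_forall fun x =>
      abs_le.2 ⟨by linarith [hg0 c x], hg1 c x⟩
  set G : EuclideanSpace ℝ (Fin d) → ℝ := fun c => ∫ x, g c x ∂μ with hGdef
  have hG0 : ∀ c, 0 ≤ G c := fun c => integral_nonneg (hg0 c)
  set F : ℕ → Ω → EuclideanSpace ℝ (Fin d) → ℝ := fun n ω c => (n : ℝ)⁻¹ * ∑ i : Fin n, g c (X i ω) with hFdef
  have hF0 : ∀ n ω c, 0 ≤ F n ω c := fun n ω c =>
    mul_nonneg (by positivity) (Finset.sum_nonneg fun i _ => hg0 _ _)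
  have hFmeas : ∀ n c, Measurable (fun ω => F n ω c) := by
    intro n c
    exact measurable_const.mul
      (Finset.measurable_sum Finset.univ fun i _ => (hgcont c).measurable.comp (hXmeas i))
  -- Lipschitz bounds
  have hgl : ∀ (x c c' : EuclideanSpace ℝ (Fin d)), ‖x‖ ≤ R → ‖c‖ ≤ R + r → ‖c'‖ ≤ R + r →
      |g c x - g c' x| ≤ L * ‖c - c'‖ := by
    intro x c c' hx hc hc'
    exact g_lip hs hr.le hR hx hc hc'
  have hGlip : ∀ c c', ‖c‖ ≤ R + r → ‖c'‖ ≤ R + r → |G c - G c'| ≤ L * ‖c - c'‖ := by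
    intro c c' hc hc'
    have h1 : G c - G c' = ∫ x, (g c x - g c' x) ∂μ :=
      (integral_sub (hgint c) (hgint c')).symm
    rw [h1]
    have h2 := norm_integral_le_integral_norm (fun x => g c x - g c' x) (μ := μ)
    rw [Real.norm_eq_abs] at h2
    refine h2.trans ?_
    have h3 : ∫ x, ‖g c x - g c' x‖ ∂μ ≤ ∫ _x, L * ‖c - c'‖ ∂μ := by
      refine integral_mono_ae ((hgint c).sub (hgint c')).norm (integrable_const _) ?_
      filter_upwards [haeR] with x hx
      rw [Real.norm_eq_abs]
      exact hgl x c c' hx hc hc'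
    refine h3.trans ?_
    simp [measure_univ]
  -- the almost sure event that all samples lie in the support
  set Ω₀ : Set Ω := ⋂ i, X i ⁻¹' (msupport μ) with hΩ₀def
  have hmsups : MeasurableSet (msupport μ) := (isClosed_msupport μ).measurableSet
  have hΩ₀ : P Ω₀ᶜ = 0 := by
    rw [hΩ₀def, Set.compl_iInter]
    refine measure_iUnion_null fun i => ?_
    have h1 : (X i ⁻¹' msupport μ)ᶜ = X i ⁻¹' (msupport μ)ᶜ := by
      rw [Set.preimage_compl]
    rw [h1, ← Measure.map_apply (hXmeas i) hmsups.compl, hXlaw i]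
    exact msupport_compl_null μ
  -- strong law of large numbers for each center
  have hSLLN : ∀ y : EuclideanSpace ℝ (Fin d), ∀ᵐ ω ∂P, Filter.Tendsto (fun n => F n ω y)
      Filter.atTop (nhds (G y)) := by
    intro y
    have hmeas : Measurable (fun ω => g y (X 0 ω)) := (hgcont y).measurable.comp (hXmeas 0)
    have hint : Integrable (fun ω => g y (X 0 ω)) P := by
      refine Integrable.mono' (integrable_const 1) hmeas.aestronglyMeasurable ?_
      exact Filter.Eventually.of_forall fun ω =>
        abs_le.2 ⟨by linarith [hg0 y (X 0 ω)], hg1 y (X 0 ω)⟩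
    have hindep : Pairwise (Function.onFun (ProbabilityTheory.IndepFun · · P)
        fun i ω => g y (X i ω)) := by
      intro i j hij
      exact (hXindep.indepFun hij).comp (hgcont y).measurable (hgcont y).measurable
    have hident : ∀ i, ProbabilityTheory.IdentDistrib (fun ω => g y (X i ω))
        (fun ω => g y (X 0 ω)) P P := by
      intro i
      refine ⟨((hgcont y).measurable.comp (hXmeas i)).aemeasurable,
        hmeas.aemeasurable, ?_⟩
      show P.map (g y ∘ X i) = P.map (g y ∘ X 0)
      rw [← Measure.map_map (hgcont y).measurable (hXmeas i),
        ← Measure.map_map (hgcont y).measurable (hXmeas 0), hXlaw i, hXlaw 0]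
    have hmean : (∫ ω, g y (X 0 ω) ∂P) = G y := by
      have h1 : ∫ x, g y x ∂(P.map (X 0)) = ∫ ω, g y (X 0 ω) ∂P :=
        integral_map (hXmeas 0).aemeasurable (hgcont y).aestronglyMeasurable
      rw [hXlaw 0] at h1
      exact h1.symm
    have h2 := ProbabilityTheory.strong_law_ae_real _ hint hindep hident
    filter_upwards [h2] with ω hω
    rw [hmean] at hω
    have h3 : (fun n => F n ω y) =
        fun n => (∑ i ∈ Finset.range n, g y (X i ω)) / n := by
      funext n
      rw [div_eq_inv_mul, ← Fin.sum_univ_eq_sum_range (fun k => g y (X k ω)) n]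
    rw [h3]
    exact hω
  -- convergence in measure for each center
  have hTIM : ∀ y : EuclideanSpace ℝ (Fin d), Filter.Tendsto
      (fun n => P {ω | ε / 2 ≤ dist (F n ω y) (G y)}) Filter.atTop (nhds 0) := by
    intro y
    have h1 : MeasureTheory.TendstoInMeasure P (fun n ω => F n ω y) Filter.atTop
        (fun _ => G y) :=
      MeasureTheory.tendstoInMeasure_of_tendsto_ae
        (fun n => (hFmeas n y).aestronglyMeasurable) (hSLLN y)
    have h2 := h1 (ENNReal.ofReal (ε / 2)) (ENNReal.ofReal_pos.2 (half_pos hε))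
    refine h2.congr fun n => ?_
    congr 1; ext ω
    simp only [Set.mem_setOf_eq, edist_dist]
    exact ENNReal.ofReal_le_ofReal_iff dist_nonneg
  -- finite δ-net of the ball of radius R + r
  obtain ⟨N, hNsub, hNfin, hNcover⟩ :=
    Metric.finite_approx_of_totallyBounded
      (isCompact_closedBall (0 : EuclideanSpace ℝ (Fin d)) (R + r)).totallyBounded δ hδ0
  set N' : Finset (EuclideanSpace ℝ (Fin d)) := hNfin.toFinset with hN'def
  set S : ℕ → EuclideanSpace ℝ (Fin d) → Set Ω := fun n y => {ω | ε / 2 ≤ dist (F n ω y) (G y)} with hSdef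
  -- the inclusion of the bad event
  have hincl : ∀ n : ℕ,
      {ω | ε < ⨆ z : msupport μ,
        |SDemp d r s (z : EuclideanSpace ℝ (Fin d)) n (fun i : Fin n => X i ω) -
          SDs d r s (z : EuclideanSpace ℝ (Fin d)) μ|} ⊆
      (⋃ y ∈ N', S n y) ∪ Ω₀ᶜ := by
    intro n ω hω
    simp only [Set.mem_setOf_eq] at hω
    by_contra hcon
    rw [Set.mem_union] at hcon
    push_neg at hcon
    obtain ⟨hnotS, hΩ₀mem⟩ := hcon
    rw [Set.notMem_compl_iff] at hΩ₀mem
    have hXsupp : ∀ i, ‖X i ω‖ ≤ R := by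
      intro i
      have := Set.mem_iInter.1 hΩ₀mem i
      exact mem_closedBall_zero_iff.1 (hsupp this)
    have hFy : ∀ y ∈ N', |F n ω y - G y| < ε / 2 := by
      intro y hy
      have h1 : ω ∉ S n y := fun h => hnotS (Set.mem_biUnion hy h)
      rw [hSdef] at h1
      simp only [Set.mem_setOf_eq, not_le, Real.dist_eq] at h1
      exact h1
    -- main bound for every point of the support
    have key : ∀ z : msupport μ,
        |SDemp d r s (z : EuclideanSpace ℝ (Fin d)) n (fun i : Fin n => X i ω) -
          SDs d r s (z : EuclideanSpace ℝ (Fin d)) μ| ≤ ε / 2 + 2 * (L * δ) := by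
      intro z
      have hzR : ‖(z : EuclideanSpace ℝ (Fin d))‖ ≤ R := mem_closedBall_zero_iff.1 (hsupp z.2)
      have hzero : (0:ℝ) ≤ ε / 2 + 2 * (L * δ) := by positivity
      have e1 : SDemp d r s (z : EuclideanSpace ℝ (Fin d)) n (fun i : Fin n => X i ω) =
          ⨅ c : Metric.sphere (z : EuclideanSpace ℝ (Fin d)) r, F n ω ↑c := rfl
      have e2 : SDs d r s (z : EuclideanSpace ℝ (Fin d)) μ =
          ⨅ c : Metric.sphere (z : EuclideanSpace ℝ (Fin d)) r, G ↑c := rfl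
      rw [e1, e2]
      refine abs_iInf_sub_iInf
        (f := fun c : Metric.sphere (z : EuclideanSpace ℝ (Fin d)) r => F n ω ↑c)
        (g := fun c : Metric.sphere (z : EuclideanSpace ℝ (Fin d)) r => G ↑c)
        (fun c => hF0 n ω ↑c) (fun c => hG0 ↑c) hzero ?_
      intro c
      have hcK : ‖(c : EuclideanSpace ℝ (Fin d))‖ ≤ R + r := by
        have h1 : dist (c : EuclideanSpace ℝ (Fin d)) (z : EuclideanSpace ℝ (Fin d)) = r := Metric.mem_sphere.1 c.2
        calc ‖(c : EuclideanSpace ℝ (Fin d))‖ = dist (c : EuclideanSpace ℝ (Fin d)) 0 := (dist_zero_right _).symm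
        _ ≤ dist (c : EuclideanSpace ℝ (Fin d)) (z : EuclideanSpace ℝ (Fin d)) + dist (z : EuclideanSpace ℝ (Fin d)) 0 := dist_triangle _ _ _
        _ = r + ‖(z : EuclideanSpace ℝ (Fin d))‖ := by rw [h1, dist_zero_right]
        _ ≤ R + r := by linarith
      obtain ⟨y, hyN, hcy⟩ := Set.mem_iUnion₂.1
        (hNcover (mem_closedBall_zero_iff.2 hcK))
      have hyN' : y ∈ N' := hNfin.mem_toFinset.2 hyN
      have hyK : ‖y‖ ≤ R + r := mem_closedBall_zero_iff.1 (hNsub hyN)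
      have hcyδ : ‖(c : EuclideanSpace ℝ (Fin d)) - y‖ < δ := by
        rw [← dist_eq_norm]
        exact Metric.mem_ball.1 hcy
      -- empirical part is Lipschitz
      have hFlip : |F n ω (c : EuclideanSpace ℝ (Fin d)) - F n ω y| ≤ L * δ := by
        have h1 : F n ω (c : EuclideanSpace ℝ (Fin d)) - F n ω y =
            (n : ℝ)⁻¹ * ∑ i : Fin n, (g (c : EuclideanSpace ℝ (Fin d)) (X i ω) - g y (X i ω)) := by
          rw [hFdef]
          simp only []
          rw [← mul_sub, ← Finset.sum_sub_distrib]
        rw [h1, abs_mul, abs_of_nonneg (by positivity : (0:ℝ) ≤ (n:ℝ)⁻¹)]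
        have h2 : |∑ i : Fin n, (g (c : EuclideanSpace ℝ (Fin d)) (X i ω) - g y (X i ω))| ≤ (n : ℝ) * (L * δ) := by
          refine (Finset.abs_sum_le_sum_abs _ _).trans ?_
          have h3 : ∀ i : Fin n, |g (c : EuclideanSpace ℝ (Fin d)) (X i ω) - g y (X i ω)| ≤ L * δ := by
            intro i
            refine (hgl (X i ω) (c : EuclideanSpace ℝ (Fin d)) y (hXsupp i) hcK hyK).trans ?_
            exact mul_le_mul_of_nonneg_left hcyδ.le hL0
          refine (Finset.sum_le_sum fun i _ => h3 i).trans ?_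
          rw [Finset.sum_const, Finset.card_univ, Fintype.card_fin, nsmul_eq_mul]
        calc (n : ℝ)⁻¹ * |∑ i : Fin n, (g (c : EuclideanSpace ℝ (Fin d)) (X i ω) - g y (X i ω))|
            ≤ (n : ℝ)⁻¹ * ((n : ℝ) * (L * δ)) :=
              mul_le_mul_of_nonneg_left h2 (by positivity)
          _ ≤ L * δ := inv_mul_nat_le n (by positivity)
      have hGlipc : |G y - G (c : EuclideanSpace ℝ (Fin d))| ≤ L * δ := by
        refine (hGlip y (c : EuclideanSpace ℝ (Fin d)) hyK hcK).trans ?_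
        have : ‖y - (c : EuclideanSpace ℝ (Fin d))‖ = ‖(c : EuclideanSpace ℝ (Fin d)) - y‖ := norm_sub_rev _ _
        rw [this]
        exact mul_le_mul_of_nonneg_left hcyδ.le hL0
      have htri : |F n ω (c : EuclideanSpace ℝ (Fin d)) - G (c : EuclideanSpace ℝ (Fin d))| ≤
          |F n ω (c : EuclideanSpace ℝ (Fin d)) - F n ω y| + |F n ω y - G y| + |G y - G (c : EuclideanSpace ℝ (Fin d))| := by
        calc |F n ω (c : EuclideanSpace ℝ (Fin d)) - G (c : EuclideanSpace ℝ (Fin d))|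
            ≤ |F n ω (c : EuclideanSpace ℝ (Fin d)) - G y| + |G y - G (c : EuclideanSpace ℝ (Fin d))| := abs_sub_le _ _ _
          _ ≤ (|F n ω (c : EuclideanSpace ℝ (Fin d)) - F n ω y| + |F n ω y - G y|) + |G y - G (c : EuclideanSpace ℝ (Fin d))| := by
              have := abs_sub_le (F n ω (c : EuclideanSpace ℝ (Fin d))) (F n ω y) (G y)
              linarith
      have hfinal : |F n ω (c : EuclideanSpace ℝ (Fin d)) - G (c : EuclideanSpace ℝ (Fin d))| ≤ ε / 2 + 2 * (L * δ) := by
        have := hFy y hyN'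
        linarith
      exact hfinal
    have hsup : (⨆ z : msupport μ,
        |SDemp d r s (z : EuclideanSpace ℝ (Fin d)) n (fun i : Fin n => X i ω) -
          SDs d r s (z : EuclideanSpace ℝ (Fin d)) μ|) ≤ ε / 2 + 2 * (L * δ) :=
      Real.iSup_le key (by positivity)
    have : ε < ε := lt_of_lt_of_le hω (hsup.trans (by linarith))
    exact lt_irrefl _ this
  -- conclude by a union bound and convergence in measure
  have hupper : Filter.Tendsto (fun n => ∑ y ∈ N', P (S n y)) Filter.atTop (nhds 0) := by
    have h1 := Filter.Tendsto.congr (fun n => rfl)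
      (tendsto_finset_sum N' (fun y _ => hTIM y))
    simpa using h1
  refine tendsto_of_tendsto_of_tendsto_of_le_of_le
    (tendsto_const_nhds) hupper (fun n => zero_le) (fun n => ?_)
  calc P {ω | ε < ⨆ z : msupport μ,
        |SDemp d r s (z : EuclideanSpace ℝ (Fin d)) n (fun i : Fin n => X i ω) -
          SDs d r s (z : EuclideanSpace ℝ (Fin d)) μ|}
      ≤ P ((⋃ y ∈ N', S n y) ∪ Ω₀ᶜ) := measure_mono (hincl n)
    _ ≤ P (⋃ y ∈ N', S n y) + P Ω₀ᶜ := measure_union_le _ _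
    _ = P (⋃ y ∈ N', S n y) := by rw [hΩ₀, add_zero]
    _ ≤ ∑ y ∈ N', P (S n y) := measure_biUnion_finset_le _ _
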